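/- arXiv:2603.05635 — 5 statements merged into one kernel-verified Lean document; each statement's English description precedes it below -/
import Mathlib

section
/- Let F be an algebraically closed field and let A be a finite-dimensional F-algebra such that every nilpotent element of A is strongly nilpotent. Then there exists m ≥ 1 such that [x₁,x₂]^m is a polynomial identity of A. -/
/-- `p` is a polynomial identity of the `k`-algebra `A`: every `k`-algebra
homomorphism from the free associative algebra on countably many variables to
`A` (equivalently, every substitution of elements of `A` for the variables)
sends `p` to `0`. -/
def IsPolyId (k A : Type*) [CommRing k] [Semiring A] [Algebra k A]
    (p : FreeAlgebra k ℕ) : Prop :=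
  ∀ f : ℕ → A, FreeAlgebra.lift k f p = 0

/-- `[x₁,x₂]^m`, the `m`-th power of the commutator of the first two variables
of the free algebra. -/
noncomputable def commPow (k : Type*) [CommRing k] (m : ℕ) : FreeAlgebra k ℕ :=
  (FreeAlgebra.ι k 0 * FreeAlgebra.ι k 1 - FreeAlgebra.ι k 1 * FreeAlgebra.ι k 0) ^ m

/-- `[x₁,x₂][x₃,x₄]⋯[x₂ₘ₋₁,x₂ₘ]`, the product of `m` commutators in `2m`
distinct variables of the free algebra. -/
noncomputable def commProd (k : Type*) [CommRing k] (m : ℕ) : FreeAlgebra k ℕ :=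
  ((List.range m).map (fun i =>
    FreeAlgebra.ι k (2 * i) * FreeAlgebra.ι k (2 * i + 1)
      - FreeAlgebra.ι k (2 * i + 1) * FreeAlgebra.ι k (2 * i))).prod

/-- The standard polynomial `st_d(x₁,…,x_d) = Σ_{σ ∈ S_d} sgn(σ) x_{σ(1)}⋯x_{σ(d)}`
in the free algebra. -/
noncomputable def stPoly (k : Type*) [CommRing k] (d : ℕ) : FreeAlgebra k ℕ :=
  ∑ σ : Equiv.Perm (Fin d),
    (Equiv.Perm.sign σ : ℤ) •
      ((List.finRange d).map (fun i => FreeAlgebra.ι k ((σ i : Fin d) : ℕ))).prod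

/-- `A` satisfies a proper (monic multilinear) polynomial identity: for some
`n ≥ 1` there are coefficients `c σ ∈ k` for the non-identity permutations `σ`
of `{1,…,n}` such that `x₁⋯x_n + Σ_{σ ≠ id} c_σ x_{σ(1)}⋯x_{σ(n)}` is a
polynomial identity of `A`. -/
def SatisfiesProperId (k A : Type*) [CommRing k] [Semiring A] [Algebra k A] : Prop :=
  ∃ n : ℕ, 1 ≤ n ∧ ∃ c : Equiv.Perm (Fin n) → k,
    IsPolyId k A
      (((List.finRange n).map (fun i => FreeAlgebra.ι k (i : ℕ))).prod
        + ∑ σ ∈ Finset.univ.erase (1 : Equiv.Perm (Fin n)),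
            c σ • ((List.finRange n).map (fun i => FreeAlgebra.ι k ((σ i : Fin n) : ℕ))).prod)

/-- `a` is strongly nilpotent: every sequence `s` with `s 0 = a` and
`s (n+1) ∈ s n • A • s n` is eventually zero. -/
def IsStronglyNilpotent {A : Type*} [Ring A] (a : A) : Prop :=
  ∀ s : ℕ → A, s 0 = a → (∀ n, ∃ x : A, s (n + 1) = s n * x * s n) →
    ∃ N, ∀ n ≥ N, s n = 0

open Polynomial

section Aux

variable {F A : Type*} [Field F] [Ring A] [Algebra F A]

/-- `J` is a two-sided ideal (as an `F`-submodule). -/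
def AuxTS (J : Submodule F A) : Prop := ∀ (a : A), ∀ x ∈ J, a * x ∈ J ∧ x * a ∈ J

lemma auxPowMono {M N : Submodule F A} (h : M ≤ N) : ∀ k, M ^ k ≤ N ^ k
  | 0 => le_rfl
  | k + 1 => by
      rw [pow_succ, pow_succ]
      exact mul_le_mul' (auxPowMono h k) h

variable [FiniteDimensional F A]

lemma auxExistsMax :
    ∃ J : Submodule F A, AuxTS J ∧ (∃ m, J ^ (m + 1) = ⊥) ∧
      ∀ K : Submodule F A, AuxTS K → (∃ m, K ^ (m + 1) = ⊥) → J ≤ K → K = J := by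
  classical
  set S : Set ℕ :=
    {n | ∃ J : Submodule F A, AuxTS J ∧ (∃ m, J ^ (m + 1) = ⊥) ∧ Module.finrank F J = n} with hS
  have hbot : (⊥ : Submodule F A) ∈ {J : Submodule F A | AuxTS J ∧ (∃ m, J ^ (m+1) = ⊥)} := by
    constructor
    · intro a x hx
      rw [Submodule.mem_bot] at hx
      subst hx
      simp
    · exact ⟨0, by simp⟩
  have hne : S.Nonempty := ⟨Module.finrank F (⊥ : Submodule F A), ⊥, hbot.1, hbot.2, rfl⟩
  have hbdd : BddAbove S := by
    refine ⟨Module.finrank F A, ?_⟩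
    rintro n ⟨J, -, -, rfl⟩
    exact Submodule.finrank_le J
  obtain ⟨J, hTS, hnil, hrank⟩ := Nat.sSup_mem hne hbdd
  refine ⟨J, hTS, hnil, ?_⟩
  intro K hKTS hKnil hJK
  have hK : Module.finrank F K ≤ sSup S := le_csSup hbdd ⟨K, hKTS, hKnil, rfl⟩
  exact (Submodule.eq_of_le_of_finrank_le hJK (hrank ▸ hK)).symm

end Aux

section Aux2

variable {F A : Type*} [Field F] [Ring A] [Algebra F A] [FiniteDimensional F A]

lemma auxNilpotentMem (h : ∀ a : A, IsNilpotent a → IsStronglyNilpotent a)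
    {J : Submodule F A} (hTS : AuxTS J) (hnil : ∃ m, J ^ (m + 1) = ⊥)
    (hmax : ∀ K : Submodule F A, AuxTS K → (∃ m, K ^ (m + 1) = ⊥) → J ≤ K → K = J)
    {x : A} (hx : IsNilpotent x) : x ∈ J := by
  classical
  by_contra hxJ
  -- key step : any element outside J admits y with a*y*a outside J
  have key : ∀ a : A, a ∉ J → ∃ y : A, a * y * a ∉ J := by
    intro a ha
    by_contra hcon
    push_neg at hcon
    set G : Set A := {z : A | ∃ u v : A, z = u * a * v} with hG
    set T : Submodule F A := Submodule.span F G with hT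
    have hGmem : ∀ u v : A, u * a * v ∈ T := fun u v =>
      Submodule.subset_span ⟨u, v, rfl⟩
    have haT : a ∈ T := by
      have : a = 1 * a * 1 := by rw [one_mul, mul_one]
      rw [this]; exact hGmem 1 1
    -- T * T ≤ J
    have hTT : T * T ≤ J := by
      rw [hT, Submodule.span_mul_span]
      rw [Submodule.span_le]
      rintro z ⟨z1, hz1, z2, hz2, rfl⟩
      obtain ⟨u, v, rfl⟩ := hz1
      obtain ⟨u', v', rfl⟩ := hz2
      have h1 : a * (v * u') * a ∈ J := hcon (v * u')
      have h2 : u * (a * (v * u') * a) ∈ J := (hTS u _ h1).1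
      have h3 : (u * (a * (v * u') * a)) * v' ∈ J := (hTS v' _ h2).2
      have : u * a * v * (u' * a * v') = (u * (a * (v * u') * a)) * v' := by
        noncomm_ring
      show u * a * v * (u' * a * v') ∈ J
      rw [this]; exact h3
    set K : Submodule F A := J ⊔ T with hK
    have hKTS : AuxTS K := by
      intro b z hz
      rw [hK, Submodule.mem_sup] at hz
      obtain ⟨j, hj, t, ht, rfl⟩ := hz
      have htl : ∀ w ∈ T, b * w ∈ T ∧ w * b ∈ T := by
        intro w hw
        refine Submodule.span_induction ?_ ?_ ?_ ?_ hw
        · rintro z ⟨u, v, rfl⟩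
          constructor
          · have : b * (u * a * v) = (b * u) * a * v := by noncomm_ring
            rw [this]; exact hGmem _ _
          · have : (u * a * v) * b = u * a * (v * b) := by noncomm_ring
            rw [this]; exact hGmem _ _
        · simp
        · intro z w _ _ hz hw
          exact ⟨by rw [mul_add]; exact add_mem hz.1 hw.1,
                 by rw [add_mul]; exact add_mem hz.2 hw.2⟩
        · intro c z _ hz
          exact ⟨by rw [mul_smul_comm]; exact Submodule.smul_mem _ _ hz.1,
                 by rw [smul_mul_assoc]; exact Submodule.smul_mem _ _ hz.2⟩
      obtain ⟨ht1, ht2⟩ := htl t ht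
      constructor
      · rw [mul_add]
        exact add_mem (Submodule.mem_sup_left (hTS b j hj).1) (Submodule.mem_sup_right ht1)
      · rw [add_mul]
        exact add_mem (Submodule.mem_sup_left (hTS b j hj).2) (Submodule.mem_sup_right ht2)
    have hKsq : K * K ≤ J := by
      rw [Submodule.mul_le]
      intro m hm n hn
      rw [hK, Submodule.mem_sup] at hm hn
      obtain ⟨j1, hj1, t1, ht1, rfl⟩ := hm
      obtain ⟨j2, hj2, t2, ht2, rfl⟩ := hn
      have e : (j1 + t1) * (j2 + t2) = j1 * (j2 + t2) + t1 * j2 + t1 * t2 := by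
        noncomm_ring
      rw [e]
      exact add_mem (add_mem (hTS (j2 + t2) j1 hj1).2 (hTS t1 j2 hj2).1)
        (hTT (Submodule.mul_mem_mul ht1 ht2))
    obtain ⟨m, hm⟩ := hnil
    have hKnil : K ^ (2 * m + 1 + 1) = ⊥ := by
      have h1 : K ^ (2 * (m + 1)) = (K * K) ^ (m + 1) := by
        rw [← pow_two, ← pow_mul]
      have h2 : (K * K) ^ (m + 1) ≤ J ^ (m + 1) := auxPowMono hKsq (m + 1)
      have : K ^ (2 * m + 1 + 1) ≤ ⊥ := by
        have : 2 * m + 1 + 1 = 2 * (m + 1) := by ring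
        rw [this, h1, ← hm]; exact h2
      exact le_bot_iff.mp this
    have hKJ : K = J := hmax K hKTS ⟨2 * m + 1, hKnil⟩ le_sup_left
    exact ha (hKJ ▸ (Submodule.mem_sup_right haT : a ∈ K))
  -- build the never-vanishing chain
  let f : {b : A // b ∉ J} → {b : A // b ∉ J} := fun b =>
    ⟨b.1 * Classical.choose (key b.1 b.2) * b.1, Classical.choose_spec (key b.1 b.2)⟩
  let s : ℕ → A := fun n => (f^[n] ⟨x, hxJ⟩).1
  obtain ⟨N, hN⟩ := h x hx s (by simp [s]) (by
    intro n
    refine ⟨Classical.choose (key (s n) (f^[n] ⟨x, hxJ⟩).2), ?_⟩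
    show (f^[n + 1] ⟨x, hxJ⟩).1 = _
    rw [Function.iterate_succ_apply'])
  have hmem : s N ∉ J := (f^[N] ⟨x, hxJ⟩).2
  exact hmem (hN N le_rfl ▸ Submodule.zero_mem J)

end Aux2

section Aux3

variable {F A : Type*} [Field F] [IsAlgClosed F] [Ring A] [Algebra F A] [FiniteDimensional F A]

lemma auxProdDvd [DecidableEq F] (R : Finset F) (g : F[X]) (hg : ∀ l ∈ R, g.eval l = 0) :
    (∏ l ∈ R, (X - C l)) ∣ g := by
  refine Finset.prod_dvd_of_coprime ?_ fun l hl => (dvd_iff_isRoot).mpr (hg l hl)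
  intro l hl l' hl' hne
  exact Polynomial.pairwise_coprime_X_sub_C Function.injective_id hne

lemma auxQNilpotent [DecidableEq F] (x : A) :
    IsNilpotent ((aeval x) (∏ l ∈ (minpoly F x).roots.toFinset, (X - C l))) := by
  classical
  have hInt : IsIntegral F x := IsIntegral.of_finite F x
  have hsplit : minpoly F x = ((minpoly F x).roots.map fun a => X - C a).prod :=
    (IsAlgClosed.splits _).eq_prod_roots_of_monic (minpoly.monic hInt)
  have h1 : ((minpoly F x).roots.map fun a => X - C a).prod ∣
      (∏ l ∈ (minpoly F x).roots.toFinset, (X - C l)) ^ (minpoly F x).natDegree := by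
    rw [prod_multiset_root_eq_finset_root, ← Finset.prod_pow]
    refine Finset.prod_dvd_prod_of_dvd _ _ fun l hl => pow_dvd_pow _ ?_
    rw [← Polynomial.count_roots]
    exact le_trans (Multiset.count_le_card _ _) (Polynomial.card_roots' _)
  have h2 : minpoly F x ∣
      (∏ l ∈ (minpoly F x).roots.toFinset, (X - C l)) ^ (minpoly F x).natDegree := by
    conv_lhs => rw [hsplit]
    exact h1
  obtain ⟨g, hg⟩ := h2
  refine ⟨(minpoly F x).natDegree, ?_⟩
  rw [← map_pow, hg, map_mul, minpoly.aeval, zero_mul]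

lemma auxCommMem (h : ∀ a : A, IsNilpotent a → IsStronglyNilpotent a)
    {J : Submodule F A} (hTS : AuxTS J) (hnil : ∃ m, J ^ (m + 1) = ⊥)
    (hmax : ∀ K : Submodule F A, AuxTS K → (∃ m, K ^ (m + 1) = ⊥) → J ≤ K → K = J)
    (x y : A) : x * y - y * x ∈ J := by
  have : DecidableEq F := Classical.decEq F
  have hmem : ∀ z : A, IsNilpotent z → z ∈ J := fun z hz =>
    auxNilpotentMem h hTS hnil hmax hz
  have helt : ∀ z ∈ J, IsNilpotent z := by
    obtain ⟨m, hm⟩ := hnil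
    intro z hz
    refine ⟨m + 1, ?_⟩
    have := Submodule.pow_mem_pow (M := J) hz (m + 1)
    rw [hm, Submodule.mem_bot] at this
    exact this
  have hsq : ∀ z : A, z * z ∈ J → z ∈ J := by
    intro z hz
    obtain ⟨k, hk⟩ := helt _ hz
    refine hmem z ⟨2 * k, ?_⟩
    rw [pow_mul, pow_two]
    exact hk
  -- idempotents mod J are central mod J
  have hcentral : ∀ e w : A, e * e - e ∈ J → e * w - w * e ∈ J := by
    intro e w hd
    set d : A := e * e - e with hdef
    have hu : (e * w - e * w * e) ∈ J := by
      apply hsq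
      have : (e * w - e * w * e) * (e * w - e * w * e)
          = e * w * d * w * e - e * w * d * w := by rw [hdef]; noncomm_ring
      rw [this]
      exact sub_mem ((hTS e _ ((hTS w _ ((hTS (e*w) _ hd).1)).2)).2)
        ((hTS w _ ((hTS (e*w) _ hd).1)).2)
    have hv : (w * e - e * w * e) ∈ J := by
      apply hsq
      have : (w * e - e * w * e) * (w * e - e * w * e)
          = e * w * d * w * e - w * d * w * e := by rw [hdef]; noncomm_ring
      rw [this]
      exact sub_mem ((hTS e _ ((hTS w _ ((hTS (e*w) _ hd).1)).2)).2)
        ((hTS e _ ((hTS w _ ((hTS w _ hd).1)).2)).2)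
    have : e * w - w * e = (e * w - e * w * e) - (w * e - e * w * e) := by noncomm_ring
    rw [this]
    exact sub_mem hu hv
  set R : Finset F := (minpoly F x).roots.toFinset with hR
  have hqJ : (aeval x) (∏ l ∈ R, (X - C l)) ∈ J := hmem _ (auxQNilpotent x)
  have haevalJ : ∀ g : F[X], (∀ l ∈ R, g.eval l = 0) → (aeval x) g ∈ J := by
    intro g hg
    obtain ⟨r, hr⟩ := auxProdDvd R g hg
    rw [hr, map_mul]
    exact (hTS ((aeval x) r) _ hqJ).2
  -- Lagrange basis evaluation helpers
  have hb1 : ∀ m ∈ R, (Lagrange.basis R id m).eval m = 1 := by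
    intro m hm
    simpa using Lagrange.eval_basis_self (v := id) (Set.injOn_id _) hm
  have hb0 : ∀ l m : F, l ≠ m → m ∈ R → (Lagrange.basis R id l).eval m = 0 := by
    intro l m hlm hm
    simpa using Lagrange.eval_basis_of_ne (v := id) hlm hm
  -- the idempotents
  set e : F → A := fun l => (aeval x) (Lagrange.basis R id l) with he
  have hecent : ∀ l ∈ R, ∀ w : A, e l * w - w * e l ∈ J := by
    intro l hl w
    apply hcentral
    have : e l * e l - e l = (aeval x) (Lagrange.basis R id l * Lagrange.basis R id l
        - Lagrange.basis R id l) := by rw [map_sub, map_mul]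
    rw [this]
    apply haevalJ
    intro m hm
    rw [eval_sub, eval_mul]
    by_cases hml : m = l
    · subst hml
      rw [hb1 m hm]; ring
    · rw [hb0 l m (fun hc => hml hc.symm) hm]; ring
  -- x is a combination of the idempotents mod J
  have hxJ : x - ∑ l ∈ R, l • e l ∈ J := by
    have : x - ∑ l ∈ R, l • e l
        = (aeval x) (X - ∑ l ∈ R, C l * Lagrange.basis R id l) := by
      rw [map_sub, aeval_X, map_sum]
      congr 1
      refine Finset.sum_congr rfl fun l _ => ?_
      rw [map_mul, aeval_C, Algebra.smul_def]
    rw [this]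
    apply haevalJ
    intro m hm
    rw [eval_sub, eval_X, eval_finset_sum]
    rw [Finset.sum_eq_single m]
    · rw [eval_mul, eval_C, hb1 m hm, mul_one, sub_self]
    · intro l hl hlm
      rw [eval_mul, eval_C, hb0 l m hlm hm, mul_zero]
    · intro hm'; exact absurd hm hm'
  -- conclude
  set z : A := ∑ l ∈ R, l • e l with hz
  have hzc : z * y - y * z ∈ J := by
    have : z * y - y * z = ∑ l ∈ R, l • (e l * y - y * e l) := by
      rw [hz, Finset.sum_mul, Finset.mul_sum, ← Finset.sum_sub_distrib]
      refine Finset.sum_congr rfl fun l _ => ?_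
      rw [smul_mul_assoc, mul_smul_comm, smul_sub]
    rw [this]
    exact Submodule.sum_mem _ fun l hl => Submodule.smul_mem _ _ (hecent l hl y)
  have hj := hxJ
  set j : A := x - z with hjdef
  have hxy : x * y - y * x = (j * y - y * j) + (z * y - y * z) := by
    rw [hjdef]; noncomm_ring
  rw [hxy]
  exact add_mem (sub_mem (hTS y _ hj).2 (hTS y _ hj).1) hzc

end Aux3


theorem finDim_stronglyNilpotent_implies_commPow_id
    (F A : Type*) [Field F] [IsAlgClosed F] [Ring A] [Algebra F A]
    [FiniteDimensional F A]
    (h : ∀ a : A, IsNilpotent a → IsStronglyNilpotent a) :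
    ∃ m : ℕ, 1 ≤ m ∧ IsPolyId F A (commPow F m) := by
  obtain ⟨J, hTS, ⟨m, hm⟩, hmax⟩ := auxExistsMax (F := F) (A := A)
  refine ⟨m + 1, Nat.le_add_left 1 m, fun f => ?_⟩
  unfold commPow
  rw [map_pow, map_sub, map_mul, map_mul, FreeAlgebra.lift_ι_apply, FreeAlgebra.lift_ι_apply]
  have hc : f 0 * f 1 - f 1 * f 0 ∈ J :=
    auxCommMem h hTS ⟨m, hm⟩ hmax (f 0) (f 1)
  have := Submodule.pow_mem_pow (M := J) hc (m + 1)
  rw [hm, Submodule.mem_bot] at this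
  exact this
end

section
/- Let F be an algebraically closed field and let A be an F-algebra such that [x₁,x₂]^m is a polynomial identity of A for some m ≥ 1. If M is a simple left A-module that is finite-dimensional as an F-vector space, then dim_F M = 1. -/
section Aux
variable {F A M : Type*} [Field F] [IsAlgClosed F] [Ring A] [Algebra F A]
  [AddCommGroup M] [Module A M] [IsSimpleModule A M]
  [Module F M] [IsScalarTower F A M] [FiniteDimensional F M]

lemma schur_scalar (φ : M →ₗ[A] M) : ∃ c : F, ∀ x : M, φ x = c • x := by
  have : Nontrivial M := IsSimpleModule.nontrivial A M
  obtain ⟨c, hc⟩ :=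
    Module.End.exists_eigenvalue (φ.restrictScalars F : Module.End F M)
  obtain ⟨x₀, hx₀⟩ := hc.exists_hasEigenvector
  refine ⟨c, fun x => ?_⟩
  rcases LinearMap.injective_or_eq_zero (φ - c • (LinearMap.id : M →ₗ[A] M)) with h | h
  · exfalso
    have h0 : (φ - c • (LinearMap.id : M →ₗ[A] M)) x₀ = 0 := by
      have := hx₀.apply_eq_smul
      simp only [LinearMap.sub_apply, LinearMap.smul_apply, LinearMap.id_apply]
      simpa using sub_eq_zero.mpr this
    exact hx₀.right (h (by simpa using h0))
  · have := LinearMap.congr_fun h x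
    simpa [sub_eq_zero] using this

lemma density {v w : M} (hvw : LinearIndependent F ![v, w]) (x : M) :
    ∃ a : A, a • v = x ∧ a • w = 0 := by
  classical
  set ρv := LinearMap.toSpanSingleton A M v with hρv
  set ρw := LinearMap.toSpanSingleton A M w with hρw
  rcases eq_bot_or_eq_top ((LinearMap.ker ρw).map ρv) with hN | hN
  · exfalso
    have hw : w ≠ 0 := by have := hvw.ne_zero 1; simpa using this
    have hsurj : Function.Surjective ρw :=
      IsSimpleModule.toSpanSingleton_surjective A hw
    have hle : LinearMap.ker ρw ≤ LinearMap.ker ρv := fun a ha => by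
      have : ρv a ∈ (LinearMap.ker ρw).map ρv := Submodule.mem_map_of_mem ha
      rw [hN] at this
      simpa using this
    set e := ρw.quotKerEquivOfSurjective hsurj
    set φ : M →ₗ[A] M := ((LinearMap.ker ρw).liftQ ρv hle).comp e.symm.toLinearMap with hφ
    have hφw : φ w = v := by
      have h1 : e (Submodule.Quotient.mk (1 : A)) = w := by
        simp [e, LinearMap.quotKerEquivOfSurjective, ρw]
      have h2 : e.symm w = Submodule.Quotient.mk (1 : A) :=
        e.symm_apply_eq.mpr h1.symm
      simp [hφ, h2, ρv]
    obtain ⟨c, hc⟩ := schur_scalar (F := F) φ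
    have : v = c • w := by rw [← hφw, hc]
    have := (LinearIndependent.pair_iff.mp hvw) 1 (-c) (by
      rw [one_smul, neg_smul, ← sub_eq_add_neg, sub_eq_zero]; exact this)
    exact one_ne_zero this.1
  · have hx : x ∈ (LinearMap.ker ρw).map ρv := hN ▸ Submodule.mem_top
    obtain ⟨a, ha, rfl⟩ := hx
    exact ⟨a, rfl, ha⟩

end Aux

theorem simple_module_one_dimensional
    (F A : Type*) [Field F] [IsAlgClosed F] [Ring A] [Algebra F A]
    (m : ℕ) (hm : 1 ≤ m) (hid : IsPolyId F A (commPow F m))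
    (M : Type*) [AddCommGroup M] [Module A M] [IsSimpleModule A M]
    [Module F M] [IsScalarTower F A M] [FiniteDimensional F M] :
    Module.finrank F M = 1 := by
  have hnt : Nontrivial M := IsSimpleModule.nontrivial A M
  have h1 : 1 ≤ Module.finrank F M := Module.finrank_pos
  by_contra hne
  have h2 : 2 ≤ Module.finrank F M := by omega
  -- two linearly independent vectors
  set bb := Module.finBasis F M
  set v := bb ⟨0, by omega⟩ with hv
  set w := bb ⟨1, by omega⟩ with hw
  have hvw : LinearIndependent F ![v, w] := by
    have hinj : Function.Injective
        (fun i : Fin 2 => (![⟨0, by omega⟩, ⟨1, by omega⟩] : Fin 2 → Fin (Module.finrank F M)) i) := by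
      intro i j hij
      fin_cases i <;> fin_cases j <;> simp_all
    have := bb.linearIndependent.comp _ hinj
    have heq : (⇑bb ∘ fun i : Fin 2 =>
        (![⟨0, by omega⟩, ⟨1, by omega⟩] : Fin 2 → Fin (Module.finrank F M)) i) = ![v, w] := by
      ext i
      fin_cases i <;> simp [hv, hw]
    rwa [heq] at this
  have hwv : LinearIndependent F ![w, v] := by
    rw [LinearIndependent.pair_iff] at hvw ⊢
    intro s t hst
    have := hvw t s (by rw [← hst]; abel)
    exact ⟨this.2, this.1⟩
  have hv0 : v ≠ 0 := by have := hvw.ne_zero 0; simpa using this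
  have hw0 : w ≠ 0 := by have := hvw.ne_zero 1; simpa using this
  obtain ⟨a, hav, haw⟩ := density (A := A) hvw v
  obtain ⟨b1, hb1v, hb1w⟩ := density (A := A) hvw w
  obtain ⟨b2, hb2w, hb2v⟩ := density (A := A) hwv v
  set b := b1 + b2 with hb
  have hbv : b • v = w := by rw [hb, add_smul, hb1v, hb2v, add_zero]
  have hbw : b • w = v := by rw [hb, add_smul, hb1w, hb2w, zero_add]
  set r := a * b - b * a with hr
  have hrv : r • v = -w := by
    rw [hr, sub_smul, mul_smul, mul_smul, hbv, haw, hav, hbv]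
    simp
  have hrw : r • w = v := by
    rw [hr, sub_smul, mul_smul, mul_smul, hbw, hav, haw]
    simp
  have hcycle : ∀ k : ℕ, r ^ k • v = v ∨ r ^ k • v = -w ∨ r ^ k • v = -v ∨ r ^ k • v = w := by
    intro k
    induction k with
    | zero => left; simp
    | succ n ih =>
      rw [pow_succ', mul_smul]
      rcases ih with h | h | h | h <;> rw [h]
      · right; left; exact hrv
      · right; right; left; rw [smul_neg, hrw]
      · right; right; right; rw [smul_neg, hrv, neg_neg]
      · left; exact hrw
  have hrm : r ^ m = 0 := by
    have := hid (fun i => if i = 0 then a else b)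
    simpa [commPow, hr] using this
  have := hcycle m
  rw [hrm, zero_smul] at this
  rcases this with h | h | h | h
  · exact hv0 h.symm
  · exact hw0 (neg_eq_zero.mp h.symm)
  · exact hv0 (neg_eq_zero.mp h.symm)
  · exact hw0 h.symm
end

section
/- Let k be a commutative unital ring, let m ≥ 1, and let A be a k-algebra such that the product of m commutators [x₁,x₂][x₃,x₄]⋯[x₂ₘ₋₁,x₂ₘ] is a polynomial identity of A. Then the two-sided ideal of A generated by all commutators {ab − ba : a, b ∈ A} is nilpotent: there exists N such that every product of N elements of this ideal equals 0. -/
section CIN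

variable {A : Type*} [Ring A]

/-- The set of "commutators" `a*b - b*a`. -/
def CINComms (A : Type*) [Ring A] : Set A := {y : A | ∃ a b : A, y = a * b - b * a}

lemma CINComms.comm (c v : A) : c * v - v * c ∈ CINComms A := ⟨c, v, rfl⟩

/-- Additive group generated by elements `u * c₁ ⋯ cₙ` with the `cᵢ` commutators. -/
def CINT (A : Type*) [Ring A] (n : ℕ) : AddSubgroup A :=
  AddSubgroup.closure { x : A | ∃ (u : A) (l : List A),
    l.length = n ∧ (∀ c ∈ l, c ∈ CINComms A) ∧ x = u * l.prod }

lemma CINT.gen {n : ℕ} (u : A) (l : List A) (hl : l.length = n)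
    (hc : ∀ c ∈ l, c ∈ CINComms A) : u * l.prod ∈ CINT A n :=
  AddSubgroup.subset_closure ⟨u, l, hl, hc, rfl⟩

lemma CINT.top (x : A) : x ∈ CINT A 0 := by
  simpa using CINT.gen x [] rfl (by simp)

lemma CINT.left {n : ℕ} (u : A) {t : A} (ht : t ∈ CINT A n) : u * t ∈ CINT A n := by
  induction ht using AddSubgroup.closure_induction with
  | mem x hx =>
    obtain ⟨v, l, hl, hc, rfl⟩ := hx
    simpa [mul_assoc] using CINT.gen (u * v) l hl hc
  | zero => simpa using (CINT A n).zero_mem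
  | add x y _ _ hx hy => simpa [mul_add] using (CINT A n).add_mem hx hy
  | neg x _ hx => simpa using (CINT A n).neg_mem hx

lemma CINT.step {n : ℕ} {c : A} (hcC : c ∈ CINComms A) (u : A) {t : A}
    (ht : t ∈ CINT A n) : u * (c * t) ∈ CINT A (n + 1) := by
  induction ht using AddSubgroup.closure_induction with
  | mem x hx =>
    obtain ⟨v, l, hl, hc, rfl⟩ := hx
    have h1 : (u * v) * (c :: l).prod ∈ CINT A (n + 1) :=
      CINT.gen _ _ (by simp [hl]) (by
        intro d hd
        rcases List.mem_cons.mp hd with h | h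
        · exact h ▸ hcC
        · exact hc d h)
    have h2 : u * ((c * v - v * c) :: l).prod ∈ CINT A (n + 1) :=
      CINT.gen _ _ (by simp [hl]) (by
        intro d hd
        rcases List.mem_cons.mp hd with h | h
        · exact h ▸ CINComms.comm c v
        · exact hc d h)
    have key : u * (c * (v * l.prod)) =
        (u * v) * (c :: l).prod + u * ((c * v - v * c) :: l).prod := by
      simp only [List.prod_cons]
      noncomm_ring
    rw [key]
    exact (CINT A (n + 1)).add_mem h1 h2
  | zero => simpa using (CINT A (n + 1)).zero_mem
  | add x y _ _ hx hy => simpa [mul_add] using (CINT A (n + 1)).add_mem hx hy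
  | neg x _ hx => simpa using (CINT A (n + 1)).neg_mem hx

lemma CINT.prod_mul {n : ℕ} (l : List A) (hc : ∀ c ∈ l, c ∈ CINComms A) (u : A)
    {t : A} (ht : t ∈ CINT A n) : u * (l.prod * t) ∈ CINT A (l.length + n) := by
  induction l generalizing u with
  | nil => simpa using CINT.left u ht
  | cons c l' ih =>
    have h1 : l'.prod * t ∈ CINT A (l'.length + n) := by
      simpa using ih (fun d hd => hc d (List.mem_cons_of_mem _ hd)) 1
    have := CINT.step (hc c (List.mem_cons_self)) u h1
    simp only [List.prod_cons, List.length_cons]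
    rw [show l'.length + 1 + n = l'.length + n + 1 by omega, mul_assoc c]
    exact this

lemma CINT.mul {a b : ℕ} {x y : A} (hx : x ∈ CINT A a) (hy : y ∈ CINT A b) :
    x * y ∈ CINT A (a + b) := by
  induction hx using AddSubgroup.closure_induction with
  | mem z hz =>
    obtain ⟨u, l, hl, hc, rfl⟩ := hz
    have := CINT.prod_mul l hc u hy
    rw [hl] at this
    simpa [mul_assoc] using this
  | zero => simpa using (CINT A (a + b)).zero_mem
  | add z w _ _ hz hw => simpa [add_mul] using (CINT A (a + b)).add_mem hz hw
  | neg z _ hz => simpa using (CINT A (a + b)).neg_mem hz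

lemma CINT.right {n : ℕ} {x : A} (hx : x ∈ CINT A n) (r : A) : x * r ∈ CINT A n := by
  simpa using CINT.mul hx (CINT.top r)

/-- The two-sided ideal generated by commutators sits inside `CINT A 1`. -/
lemma span_le_CINT {x : A}
    (hx : x ∈ TwoSidedIdeal.span {y : A | ∃ a b : A, y = a * b - b * a}) :
    x ∈ CINT A 1 := by
  have := TwoSidedIdeal.mem_span_iff.mp hx
    (TwoSidedIdeal.mk' (CINT A 1 : Set A) (CINT A 1).zero_mem
      (fun h1 h2 => (CINT A 1).add_mem h1 h2)
      (fun h1 => (CINT A 1).neg_mem h1)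
      (fun h1 => CINT.left _ h1)
      (fun h1 => CINT.right h1 _))
  simp only [TwoSidedIdeal.mem_mk'] at this
  apply this
  intro y hy
  rw [SetLike.mem_coe, TwoSidedIdeal.mem_mk']
  simpa using CINT.gen 1 [y] rfl (by simpa [CINComms] using hy)

end CIN

section Eval

variable {k A : Type*} [CommRing k] [Ring A] [Algebra k A]

lemma lift_commProd (m : ℕ) (f : ℕ → A) :
    FreeAlgebra.lift k f (commProd k m) =
      ((List.range m).map
        (fun i => f (2*i) * f (2*i+1) - f (2*i+1) * f (2*i))).prod := by
  unfold commProd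
  rw [map_list_prod, List.map_map]
  congr 1
  apply List.map_congr_left
  intro i _
  simp [Function.comp, FreeAlgebra.lift_ι_apply]

lemma prod_comms_eq_zero {m : ℕ} (hid : IsPolyId k A (commProd k m)) (l : List A)
    (hlen : l.length = m) (hmem : ∀ x ∈ l, x ∈ CINComms A) : l.prod = 0 := by
  classical
  set a : ℕ → A := fun i => if h : i < l.length then (hmem l[i] (l.getElem_mem h)).choose else 0
    with ha
  set b : ℕ → A := fun i => if h : i < l.length then
    (hmem l[i] (l.getElem_mem h)).choose_spec.choose else 0 with hb
  have hab : ∀ (i : ℕ) (h : i < l.length), l[i] = a i * b i - b i * a i := by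
    intro i h
    simp only [ha, hb, dif_pos h]
    exact (hmem l[i] (l.getElem_mem h)).choose_spec.choose_spec
  set f : ℕ → A := fun n => if n % 2 = 0 then a (n / 2) else b (n / 2) with hf
  have key : ((List.range m).map
      (fun i => f (2*i) * f (2*i+1) - f (2*i+1) * f (2*i))).prod = l.prod := by
    congr 1
    apply List.ext_getElem (by simp [hlen])
    intro i h1 h2
    have hi : i < l.length := by simpa [hlen] using h2
    simp only [List.getElem_map, List.getElem_range]
    have f1 : f (2*i) = a i := by
      simp only [hf]
      rw [if_pos (by omega), show 2*i/2 = i from by omega]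
    have f2 : f (2*i+1) = b i := by
      simp only [hf]
      rw [if_neg (by omega), show (2*i+1)/2 = i from by omega]
    rw [f1, f2]
    exact (hab i hi).symm
  rw [← key, ← lift_commProd (k := k) m f, hid f]

end Eval

section Final

variable {k A : Type*} [CommRing k] [Ring A] [Algebra k A]

lemma CINT.prod_mem (l : List A) (h : ∀ x ∈ l, x ∈ CINT A 1) :
    l.prod ∈ CINT A l.length := by
  induction l with
  | nil => simpa using CINT.top (1 : A)
  | cons c l' ih =>
    have := CINT.mul (h c (List.mem_cons_self))
      (ih (fun x hx => h x (List.mem_cons_of_mem _ hx)))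
    simpa [List.prod_cons, add_comm] using this

lemma CINT.eq_zero {m : ℕ} (hid : IsPolyId k A (commProd k m)) {x : A}
    (hx : x ∈ CINT A m) : x = 0 := by
  induction hx using AddSubgroup.closure_induction with
  | mem z hz =>
    obtain ⟨u, l, hl, hc, rfl⟩ := hz
    rw [prod_comms_eq_zero hid l hl hc, mul_zero]
  | zero => rfl
  | add z w _ _ hz hw => rw [hz, hw, add_zero]
  | neg z _ hz => rw [hz, neg_zero]

end Final

theorem commutator_ideal_nilpotent
    (k A : Type*) [CommRing k] [Ring A] [Algebra k A]
    (m : ℕ) (hm : 1 ≤ m) (hid : IsPolyId k A (commProd k m)) :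
    ∃ N : ℕ, ∀ l : List A, l.length = N →
      (∀ x ∈ l, x ∈ TwoSidedIdeal.span {y : A | ∃ a b : A, y = a * b - b * a}) →
      l.prod = 0 := by
  refine ⟨m, fun l hlen hmem => ?_⟩
  exact CINT.eq_zero hid (hlen ▸ CINT.prod_mem l (fun x hx => span_le_CINT (hmem x hx)))
end

section
/- Let F be a field of characteristic zero and let V be an infinite-dimensional F-vector space (for instance V = ℕ →₀ F). Then for every m ≥ 1, the product of m commutators [x₁,x₂][x₃,x₄]⋯[x₂ₘ₋₁,x₂ₘ] is not a polynomial identity of the exterior (Grassmann) algebra Λ(V). -/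
open ExteriorAlgebra in

/-- The product of `ι`'s of distinct basis vectors is nonzero. -/
lemma prod_iota_ne_zero {F : Type*} [Field F] {V : Type*} [AddCommGroup V] [Module F V]
    {I : Type*} (b : Module.Basis I F V) {n : ℕ} (g : Fin n → I) (hg : Function.Injective g) :
    (List.ofFn fun i => ExteriorAlgebra.ι F (b (g i))).prod ≠ 0 := by
  classical
  set π : V →ₗ[F] (Fin n → F) :=
    LinearMap.pi (fun i => Finsupp.lapply (g i) ∘ₗ (b.repr : V →ₗ[F] (I →₀ F))) with hπ
  set A : V [⋀^Fin n]→ₗ[F] F := (Matrix.detRowAlternating).compLinearMap π with hA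
  have hAval : A (fun i => b (g i)) = 1 := by
    rw [hA, AlternatingMap.compLinearMap_apply]
    have : (fun i => π (b (g i))) = (1 : Matrix (Fin n) (Fin n) F) := by
      funext i j
      simp only [hπ, LinearMap.pi_apply, LinearMap.comp_apply,
        LinearEquiv.coe_coe, Module.Basis.repr_self, Finsupp.lapply_apply, Finsupp.single_apply,
        Matrix.one_apply]
      exact if_congr ⟨fun h => hg h, fun h => h ▸ rfl⟩ rfl rfl
    rw [this]
    exact Matrix.det_one
  set G : ∀ i, V [⋀^Fin i]→ₗ[F] F :=
    Function.update (fun i => (0 : V [⋀^Fin i]→ₗ[F] F)) n A with hG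
  intro h
  have := liftAlternating_apply_ιMulti (R := F) (M := V) (N := F) G (fun i => b (g i))
  rw [ιMulti_apply, h, map_zero] at this
  rw [hG, Function.update_self, hAval] at this
  exact zero_ne_one this


lemma lift_commProd_eq {F : Type*} [Field F] {V : Type*} [AddCommGroup V] [Module F V]
    (w : ℕ → V) (m : ℕ) :
    FreeAlgebra.lift F (fun k => ExteriorAlgebra.ι F (w k)) (commProd F m)
      = (2 : F) ^ m • ((List.range (2 * m)).map fun k => ExteriorAlgebra.ι F (w k)).prod := by
  induction m with
  | zero => simp [commProd]
  | succ m ih =>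
    have h2 : 2 * (m + 1) = (2 * m + 1) + 1 := by ring
    rw [commProd, List.range_succ, List.map_append, List.prod_append, map_mul,
      List.map_singleton, List.prod_singleton, map_sub, map_mul, map_mul,
      FreeAlgebra.lift_ι_apply, FreeAlgebra.lift_ι_apply, ← commProd, ih]
    have hswap : ExteriorAlgebra.ι F (w (2 * m + 1)) * ExteriorAlgebra.ι F (w (2 * m))
        = - (ExteriorAlgebra.ι F (w (2 * m)) * ExteriorAlgebra.ι F (w (2 * m + 1))) :=
      neg_eq_of_add_eq_zero_right (ExteriorAlgebra.ι_add_mul_swap _ _) |>.symm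
    rw [hswap, sub_neg_eq_add, ← two_smul F]
    rw [h2, List.range_succ, List.range_succ, List.map_append, List.map_append,
      List.prod_append, List.prod_append, List.map_singleton, List.map_singleton,
      List.prod_singleton, List.prod_singleton]
    rw [smul_mul_smul_comm, pow_succ, mul_assoc]

theorem grassmann_not_satisfies_commProd
    (F : Type*) [Field F] [CharZero F] (V : Type*) [AddCommGroup V] [Module F V]
    (hV : ¬ FiniteDimensional F V) (m : ℕ) (hm : 1 ≤ m) :
    ¬ IsPolyId F (ExteriorAlgebra F V) (commProd F m) := by
  classical
  intro hPI
  have hInf : Infinite ↥(Module.Basis.ofVectorSpaceIndex F V) := by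
    rw [← not_finite_iff_infinite]
    intro hfin
    haveI := Fintype.ofFinite ↥(Module.Basis.ofVectorSpaceIndex F V)
    exact hV (Module.Finite.of_basis (Module.Basis.ofVectorSpace F V))
  set e := Infinite.natEmbedding ↥(Module.Basis.ofVectorSpaceIndex F V) with he
  set b := Module.Basis.ofVectorSpace F V with hb
  set w : ℕ → V := fun k => b (e k) with hw
  have h0 := hPI (fun k => ExteriorAlgebra.ι F (w k))
  rw [lift_commProd_eq] at h0
  have hlist : (List.range (2 * m)).map (fun k => ExteriorAlgebra.ι F (w k))
      = List.ofFn (fun i : Fin (2 * m) => ExteriorAlgebra.ι F (b (e (i : ℕ)))) := by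
    rw [List.ofFn_eq_map, ← List.map_coe_finRange_eq_range (n := 2 * m), List.map_map]
    rfl
  have hne : ((List.range (2 * m)).map fun k => ExteriorAlgebra.ι F (w k)).prod ≠ 0 := by
    rw [hlist]
    exact prod_iota_ne_zero b (fun i : Fin (2 * m) => e (i : ℕ))
      (e.injective.comp Fin.val_injective)
  exact hne ((smul_eq_zero.mp h0).resolve_left (pow_ne_zero _ two_ne_zero))
end

section
/- Let F be a field and n ≥ 2. In the matrix algebra M_n(F), consider the set S = {e₁₂, e₂₃, …, e_{n−1,n}, e_{n,1}} of matrix units. Then every product of at most n−1 elements of S (repetitions allowed, in any order) is nilpotent, but the non-unital F-subalgebra of M_n(F) generated by S is not nilpotent. -/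
theorem matrix_units_short_products_nilpotent_but_not_nilpotent_subalgebra
    (F : Type*) [Field F] (n : ℕ) (hn : 2 ≤ n) :
    (∀ l : List (Matrix (Fin n) (Fin n) F), 1 ≤ l.length → l.length ≤ n - 1 →
      (∀ x ∈ l, x ∈ Set.range (fun i : Fin n =>
        Matrix.single i (⟨(i.val + 1) % n, Nat.mod_lt _ (by omega)⟩ : Fin n) (1 : F))) →
      IsNilpotent l.prod) ∧
    ¬ (∃ N : ℕ, ∀ l : List (Matrix (Fin n) (Fin n) F), l.length = N →
        (∀ x ∈ l, x ∈ NonUnitalAlgebra.adjoin F (Set.range (fun i : Fin n =>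
          Matrix.single i (⟨(i.val + 1) % n, Nat.mod_lt _ (by omega)⟩ : Fin n) (1 : F)))) →
        l.prod = 0) := by
  have hn0 : 0 < n := by omega
  constructor
  · intro l h1 h2 hmem
    have key : ∀ l : List (Matrix (Fin n) (Fin n) F),
        (∀ x ∈ l, x ∈ Set.range (fun i : Fin n =>
          Matrix.single i (⟨(i.val + 1) % n, Nat.mod_lt _ (by omega)⟩ : Fin n) (1 : F))) →
        l = [] ∨ l.prod = 0 ∨ ∃ i j : Fin n, j.val = (i.val + l.length) % n ∧
          l.prod = Matrix.single i j 1 := by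
      intro l
      induction l with
      | nil => intro _; left; rfl
      | cons x t ih =>
        intro hm
        right
        obtain ⟨i, hx⟩ := hm x (List.mem_cons_self)
        rcases ih (fun y hy => hm y (List.mem_cons_of_mem x hy)) with ht | ht | ⟨i', j', hj', hp⟩
        · subst ht
          right
          exact ⟨i, ⟨(i.val + 1) % n, Nat.mod_lt _ hn0⟩, by simp, by simp [← hx]⟩
        · left; simp [List.prod_cons, ht]
        · by_cases hmid : (⟨(i.val + 1) % n, Nat.mod_lt _ hn0⟩ : Fin n) = i'
          · right
            refine ⟨i, j', ?_, ?_⟩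
            · rw [hj', ← hmid]
              simp only [List.length_cons]
              rw [Nat.mod_add_mod]
              congr 1
              omega
            · rw [List.prod_cons, hp, ← hx]
              dsimp only
              rw [hmid, Matrix.single_mul_single_same, one_mul]
          · left
            rw [List.prod_cons, hp, ← hx]
            dsimp only
            exact Matrix.single_mul_single_of_ne (1 : F) _ _ _ hmid 1
    rcases key l hmem with h | h | ⟨i, j, hj, hp⟩
    · exfalso; rw [h] at h1; simp at h1
    · exact ⟨1, by simpa using h⟩
    · have hij : j ≠ i := by
        intro hji
        rw [hji] at hj
        rcases lt_or_ge (i.val + l.length) n with h | h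
        · rw [Nat.mod_eq_of_lt h] at hj; omega
        · have h2n : i.val + l.length < 2 * n := by have := i.isLt; omega
          have : (i.val + l.length) % n = i.val + l.length - n := by
            rw [Nat.mod_eq_sub_mod h, Nat.mod_eq_of_lt (by omega)]
          omega
      exact ⟨2, by rw [hp, pow_two, Matrix.single_mul_single_of_ne (h := hij)]⟩
  · rintro ⟨N, hN⟩
    haveI : NeZero n := ⟨by omega⟩
    set z : Fin n := ⟨0, hn0⟩ with hz
    set a : Matrix (Fin n) (Fin n) F := Matrix.single z z 1 with haDef
    have ha0 : a ≠ 0 := by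
      intro h
      have := congrFun (congrFun h z) z
      simp [haDef, Matrix.single] at this
    have haa : a * a = a := by
      rw [haDef, Matrix.single_mul_single_same, one_mul]
    have step : ∀ m : ℕ, 1 ≤ m → m ≤ n →
        Matrix.single z (⟨m % n, Nat.mod_lt _ hn0⟩ : Fin n) (1 : F) ∈
          NonUnitalAlgebra.adjoin F (Set.range (fun i : Fin n =>
            Matrix.single i (⟨(i.val + 1) % n, Nat.mod_lt _ (by omega)⟩ : Fin n) (1 : F))) := by
      intro m
      induction m with
      | zero => intro h; omega
      | succ k ih =>
        intro _ hle
        rcases Nat.eq_zero_or_pos k with hk | hk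
        · subst hk
          apply NonUnitalAlgebra.subset_adjoin
          refine ⟨z, ?_⟩
          congr 1
        · have hk' : k % n = k := Nat.mod_eq_of_lt (by omega)
          have hmemk := ih (by omega) (by omega)
          have hgen : Matrix.single (⟨k, by omega⟩ : Fin n)
              (⟨(k + 1) % n, Nat.mod_lt _ hn0⟩ : Fin n) (1 : F) ∈
              NonUnitalAlgebra.adjoin F (Set.range (fun i : Fin n =>
                Matrix.single i
                  (⟨(i.val + 1) % n, Nat.mod_lt _ (by omega)⟩ : Fin n) (1 : F))) := by
            apply NonUnitalAlgebra.subset_adjoin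
            exact ⟨⟨k, by omega⟩, rfl⟩
          have hmul : Matrix.single z (⟨(k + 1) % n, Nat.mod_lt _ hn0⟩ : Fin n) (1 : F)
              = Matrix.single z (⟨k % n, Nat.mod_lt _ hn0⟩ : Fin n) (1 : F) *
                Matrix.single (⟨k, by omega⟩ : Fin n)
                  (⟨(k + 1) % n, Nat.mod_lt _ hn0⟩ : Fin n) (1 : F) := by
            have hmideq : (⟨k % n, Nat.mod_lt _ hn0⟩ : Fin n) = (⟨k, by omega⟩ : Fin n) :=
              Fin.ext (by simp [hk'])
            rw [hmideq, Matrix.single_mul_single_same, one_mul]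
          rw [hmul]
          exact mul_mem hmemk hgen
    have hmem : a ∈ NonUnitalAlgebra.adjoin F (Set.range (fun i : Fin n =>
        Matrix.single i (⟨(i.val + 1) % n, Nat.mod_lt _ (by omega)⟩ : Fin n) (1 : F))) := by
      have := step n (by omega) le_rfl
      have hzz : (⟨n % n, Nat.mod_lt _ hn0⟩ : Fin n) = z := Fin.ext (by simp [hz])
      rwa [hzz] at this
    rcases Nat.eq_zero_or_pos N with h0 | hpos
    · have h1 := hN [] (by simp [h0]) (by simp)
      simp only [List.prod_nil] at h1
      exact one_ne_zero h1
    · have hprod := hN (List.replicate N a) (by simp)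
        (fun x hx => by rw [List.eq_of_mem_replicate hx]; exact hmem)
      rw [List.prod_replicate] at hprod
      have hpow : ∀ m : ℕ, a ^ (m + 1) = a := by
        intro m
        induction m with
        | zero => simp
        | succ k ihp => rw [pow_succ, ihp, haa]
      obtain ⟨m, rfl⟩ := Nat.exists_eq_add_of_lt hpos
      rw [Nat.zero_add, hpow] at hprod
      exact ha0 hprod
end
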